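/- There exists a ℂ-algebra automorphism φ₀ of K = ℂ(x,y) satisfying φ₀(x) = 1 − y and φ₀(y) = (x − y)/x, and any such automorphism has order exactly 5 in Aut_ℂ(K), i.e. φ₀⁵ = id and φ₀ ≠ id. -/

import Mathlib

set_option maxHeartbeats 1000000
set_option synthInstance.maxHeartbeats 400000

noncomputable section
open MvPolynomial

/-- `K = ℂ(x,y)`, the field of rational functions in two variables over `ℂ`. -/
abbrev K : Type := FractionRing (MvPolynomial (Fin 2) ℂ)

/-- The generator `x` of `K = ℂ(x,y)`. -/
def Kx : K := algebraMap (MvPolynomial (Fin 2) ℂ) K (X 0)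

/-- The generator `y` of `K = ℂ(x,y)`. -/
def Ky : K := algebraMap (MvPolynomial (Fin 2) ℂ) K (X 1)

local notation "R2" => MvPolynomial (Fin 2) ℂ

lemma algMap_ne_zero {p : R2} (s : Fin 2 → ℂ) (h : eval s p ≠ 0) :
    algebraMap R2 K p ≠ 0 := by
  intro h0
  apply h
  have : p = 0 := IsFractionRing.injective R2 K (by rw [h0, map_zero])
  simp [this]

lemma hKx0 : Kx ≠ 0 := algMap_ne_zero (fun _ => 1) (by simp)
lemma hKy0 : Ky ≠ 0 := algMap_ne_zero (fun _ => 1) (by simp)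

lemma h1y : (1 : K) - Ky ≠ 0 := by
  have : (1 : K) - Ky = algebraMap R2 K (1 - X 1) := by rw [map_sub, map_one]; rfl
  rw [this]
  exact algMap_ne_zero (fun _ => 0) (by simp)

lemma h1x : (1 : K) - Kx ≠ 0 := by
  have : (1 : K) - Kx = algebraMap R2 K (1 - X 0) := by rw [map_sub, map_one]; rfl
  rw [this]
  exact algMap_ne_zero (fun _ => 0) (by simp)

lemma hxmy : Kx - Ky ≠ 0 := by
  have : Kx - Ky = algebraMap R2 K (X 0 - X 1) := by rw [map_sub]; rfl
  rw [this]
  exact algMap_ne_zero ![1, 0] (by simp)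

lemma hone_sub_ne : (1 : K) - Ky ≠ Kx := by
  intro h
  have h2 : algebraMap R2 K (1 - X 1 - X 0) = 0 := by
    rw [map_sub, map_sub, map_one]
    show 1 - Ky - Kx = 0
    rw [h, sub_self]
  exact algMap_ne_zero (fun _ => 0) (by simp) h2

/-- Strip powers of `X` so that the constant coefficient is nonzero. -/
lemma exists_coeff_zero_ne_zero {A L : Type*} [CommRing A] [Field L] [Algebra A L]
    {w : L} (hw : w ≠ 0) :
    ∀ p : Polynomial A, p ≠ 0 → Polynomial.aeval w p = 0 →
      ∃ q : Polynomial A, q ≠ 0 ∧ q.coeff 0 ≠ 0 ∧ Polynomial.aeval w q = 0 := by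
  suffices H : ∀ n : ℕ, ∀ p : Polynomial A, p.natDegree ≤ n → p ≠ 0 → Polynomial.aeval w p = 0 →
      ∃ q : Polynomial A, q ≠ 0 ∧ q.coeff 0 ≠ 0 ∧ Polynomial.aeval w q = 0 by
    exact fun p hp h0 => H p.natDegree p le_rfl hp h0
  intro n
  induction n with
  | zero =>
    intro p hdeg hp h0
    have hC := Polynomial.eq_C_of_natDegree_le_zero hdeg
    refine ⟨p, hp, ?_, h0⟩
    intro hc
    apply hp
    rw [hC, hc, map_zero]
  | succ n ih =>
    intro p hdeg hp h0
    by_cases hc : p.coeff 0 ≠ 0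
    · exact ⟨p, hp, hc, h0⟩
    · push_neg at hc
      have hdecomp : Polynomial.X * p.divX = p := by
        conv_rhs => rw [← Polynomial.X_mul_divX_add p]
        rw [hc, map_zero, add_zero]
      have hdx : p.divX ≠ 0 := by
        intro h
        apply hp
        rw [← hdecomp, h, mul_zero]
      have h0' : Polynomial.aeval w p.divX = 0 := by
        have h2 : Polynomial.aeval w (Polynomial.X * p.divX) = 0 := by
          rw [hdecomp]; exact h0
        rw [map_mul, Polynomial.aeval_X] at h2
        rcases mul_eq_zero.mp h2 with h | h
        · exact absurd h hw
        · exact h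
      have hlt : p.divX.natDegree ≤ n := by
        have := Polynomial.natDegree_divX_eq_natDegree_tsub_one (p := p)
        omega
      exact ih p.divX hlt hdx h0'

/-- If `1 - c/t` is algebraic over a domain `A` (with `c ∈ A`, `c ≠ 0`, `t ≠ 0`,
`1 - c/t ≠ 0`), then so is `t`. -/
lemma isAlgebraic_of_one_sub_div {A L : Type*} [CommRing A] [IsDomain A] [Field L]
    [Algebra A L] {c : A} {t : L} (hc : c ≠ 0) (ht : t ≠ 0)
    (hwne : 1 - algebraMap A L c / t ≠ 0)
    (h : IsAlgebraic A (1 - algebraMap A L c / t)) : IsAlgebraic A t := by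
  set c' : L := algebraMap A L c with hc'
  set w : L := 1 - c' / t with hwdef
  obtain ⟨p0, hp00, hp0e⟩ := h
  obtain ⟨p, hpne, hp0, hpe⟩ := exists_coeff_zero_ne_zero hwne p0 hp00 hp0e
  set n := p.natDegree with hn
  refine ⟨∑ i ∈ Finset.range (n + 1),
      Polynomial.C (p.coeff i) * Polynomial.X ^ (n - i) * (Polynomial.X - Polynomial.C c) ^ i,
      ?_, ?_⟩
  · -- nonzero: evaluate at c
    intro hq
    have hev := congrArg (Polynomial.eval c) hq
    rw [Polynomial.eval_finset_sum] at hev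
    rw [Finset.sum_eq_single_of_mem 0 (by simp)] at hev
    · simp only [Polynomial.eval_mul, Polynomial.eval_pow, Polynomial.eval_C,
        Polynomial.eval_X, pow_zero, mul_one, Nat.sub_zero, Polynomial.eval_zero] at hev
      exact (mul_ne_zero hp0 (pow_ne_zero _ hc)) hev
    · intro i _ hi0
      simp [sub_self, zero_pow hi0]
  · -- aeval t of q is zero
    have htw : t * w = t - c' := by
      rw [hwdef, mul_sub, mul_one, mul_div_cancel₀ _ ht]
    have hkey : ∀ i ∈ Finset.range (n + 1),
        algebraMap A L (p.coeff i) * t ^ (n - i) * (t - c') ^ i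
          = t ^ n * (p.coeff i • w ^ i) := by
      intro i hi
      have hi' : i ≤ n := Nat.lt_succ_iff.mp (Finset.mem_range.mp hi)
      rw [← htw, mul_pow, Algebra.smul_def]
      calc algebraMap A L (p.coeff i) * t ^ (n - i) * (t ^ i * w ^ i)
          = (t ^ (n - i) * t ^ i) * (algebraMap A L (p.coeff i) * w ^ i) := by ring
        _ = t ^ n * (algebraMap A L (p.coeff i) * w ^ i) := by
            rw [← pow_add, Nat.sub_add_cancel hi']
    rw [map_sum]
    simp only [map_mul, map_pow, map_sub, Polynomial.aeval_X, Polynomial.aeval_C]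
    rw [Finset.sum_congr rfl hkey, ← Finset.mul_sum]
    have := Polynomial.aeval_eq_sum_range (R := A) (p := p) w
    rw [← hn] at this
    rw [← this, hpe, mul_zero]

/-- The linear change of variables `X₀ ↦ 1 - X₁`, `X₁ ↦ X₀` as an algebra automorphism
of the polynomial ring. -/
def cremLin : R2 ≃ₐ[ℂ] R2 :=
  AlgEquiv.ofAlgHom (aeval ![1 - X 1, X 0]) (aeval ![X 1, 1 - X 0])
    (by apply algHom_ext; intro i; fin_cases i <;> simp)
    (by apply algHom_ext; intro i; fin_cases i <;> simp)

lemma hXY_indep : AlgebraicIndependent ℂ (fun i : Fin 2 => algebraMap R2 K (X i)) := by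
  have h := (MvPolynomial.algebraicIndependent_X (Fin 2) ℂ).map'
    (f := IsScalarTower.toAlgHom ℂ R2 K) (IsFractionRing.injective R2 K)
  convert h using 1
  rfl

lemma hB_indep : AlgebraicIndependent ℂ ![(1 : K) - Ky, Kx] := by
  have h1 : AlgebraicIndependent ℂ ![(1 : R2) - X 1, X 0] := by
    have h := (MvPolynomial.algebraicIndependent_X (Fin 2) ℂ).map'
      (f := cremLin.toAlgHom) cremLin.injective
    have he : (⇑cremLin.toAlgHom ∘ X) = ![(1 : R2) - X 1, X 0] := by
      funext i
      fin_cases i <;> simp [cremLin, AlgEquiv.ofAlgHom]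
    rwa [he] at h
  have h2 := hXY_indep.aeval_of_algebraicIndependent h1
  have he : (fun i => aeval (fun i : Fin 2 => algebraMap R2 K (X i)) (![(1 : R2) - X 1, X 0] i))
      = ![(1 : K) - Ky, Kx] := by
    funext i
    fin_cases i <;> simp [Kx, Ky]
  rwa [he] at h2

lemma hu_indep : AlgebraicIndependent ℂ ![(1 : K) - Ky] := by
  have h := hB_indep.comp ![0] (Function.injective_of_subsingleton _)
  have he : (![(1 : K) - Ky, Kx] ∘ ![0]) = ![(1 : K) - Ky] := by
    funext i; fin_cases i <;> rfl
  rwa [he] at h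

/-- The equivalence `Fin 2 ≃ Option (Fin 1)` sending `0 ↦ some 0`, `1 ↦ none`. -/
def eOpt : Fin 2 ≃ Option (Fin 1) where
  toFun := ![some 0, none]
  invFun := fun o => o.elim 1 (fun _ => 0)
  left_inv := by decide
  right_inv := by decide

lemma hKx_trans : Transcendental (Algebra.adjoin ℂ (Set.range ![(1 : K) - Ky])) Kx := by
  have hcomp : (fun o : Option (Fin 1) => o.elim Kx ![(1 : K) - Ky]) ∘ eOpt
      = ![(1 : K) - Ky, Kx] := by
    funext i; fin_cases i <;> rfl
  exact (hu_indep.option_iff_transcendental Kx).mp ((algebraicIndependent_equiv' eOpt hcomp).mp hB_indep)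

lemma hv_indep : AlgebraicIndependent ℂ ![(1 : K) - Ky, (Kx - Ky) / Kx] := by
  have key : Transcendental (Algebra.adjoin ℂ (Set.range ![(1 : K) - Ky])) ((Kx - Ky) / Kx) := by
    intro halg
    apply hKx_trans
    have humem : (1 : K) - Ky ∈ Algebra.adjoin ℂ (Set.range ![(1 : K) - Ky]) :=
      Algebra.subset_adjoin ⟨0, rfl⟩
    have hKymem : Ky ∈ Algebra.adjoin ℂ (Set.range ![(1 : K) - Ky]) := by
      have h2 := Subalgebra.sub_mem _ (Subalgebra.one_mem _) humem
      simpa [sub_sub_cancel] using h2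
    have hcval : algebraMap (Algebra.adjoin ℂ (Set.range ![(1 : K) - Ky])) K ⟨Ky, hKymem⟩
        = Ky := rfl
    have hc : (⟨Ky, hKymem⟩ : Algebra.adjoin ℂ (Set.range ![(1 : K) - Ky])) ≠ 0 := by
      intro h
      apply hKy0
      rw [← hcval, h, map_zero]
    have hweq : (Kx - Ky) / Kx
        = 1 - algebraMap (Algebra.adjoin ℂ (Set.range ![(1 : K) - Ky])) K ⟨Ky, hKymem⟩ / Kx := by
      rw [hcval, sub_div, div_self hKx0]
    have hwne : 1 - algebraMap (Algebra.adjoin ℂ (Set.range ![(1 : K) - Ky])) K ⟨Ky, hKymem⟩ / Kx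
        ≠ 0 := by
      rw [← hweq]
      exact div_ne_zero hxmy hKx0
    exact isAlgebraic_of_one_sub_div (L := K) hc hKx0 hwne (hweq ▸ halg)
  have hcomp : (fun o : Option (Fin 1) => o.elim ((Kx - Ky) / Kx) ![(1 : K) - Ky]) ∘ eOpt
      = ![(1 : K) - Ky, (Kx - Ky) / Kx] := by
    funext i; fin_cases i <;> rfl
  exact (algebraicIndependent_equiv' eOpt hcomp).mpr
    ((hu_indep.option_iff_transcendental _).mpr key)

/-- Two `ℂ`-algebra automorphisms of `K` agreeing on the generators are equal. -/
lemma algEquiv_ext {f g : K ≃ₐ[ℂ] K} (h0 : f Kx = g Kx) (h1 : f Ky = g Ky) : f = g := by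
  have hRH : f.toAlgHom.comp (IsScalarTower.toAlgHom ℂ R2 K)
      = g.toAlgHom.comp (IsScalarTower.toAlgHom ℂ R2 K) := by
    apply MvPolynomial.algHom_ext
    intro i
    fin_cases i
    · exact h0
    · exact h1
  have hring : (f : K →+* K) = (g : K →+* K) := by
    apply IsLocalization.ringHom_ext (nonZeroDivisors R2)
    exact RingHom.ext fun p => AlgHom.congr_fun hRH p
  exact AlgEquiv.ext fun z => RingHom.congr_fun hring z

/-- There is a `ℂ`-algebra automorphism `φ₀` of `K = ℂ(x,y)` with `φ₀(x) = 1 - y` and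
`φ₀(y) = (x - y)/x` (the Cremona transformation `(x:y:z) ↦ (x(z−y) : z(x−y) : xz)` read in
the chart `z = 1`), and any such automorphism has order exactly `5`. -/
theorem exists_order_five_cremona :
    (∃ φ₀ : K ≃ₐ[ℂ] K, φ₀ Kx = 1 - Ky ∧ φ₀ Ky = (Kx - Ky) / Kx) ∧
    ∀ φ₀ : K ≃ₐ[ℂ] K, φ₀ Kx = 1 - Ky → φ₀ Ky = (Kx - Ky) / Kx →
      φ₀ ^ 5 = 1 ∧ φ₀ ≠ 1 := by
  constructor
  · -- existence
    set v : Fin 2 → K := ![(1 : K) - Ky, (Kx - Ky) / Kx] with hv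
    have hvi := hv_indep
    rw [← hv] at hvi
    have htop : IntermediateField.adjoin ℂ (Set.range v) = ⊤ := by
      rw [eq_top_iff]
      intro z _
      set F' := IntermediateField.adjoin ℂ (Set.range v) with hF'
      have hu : (1 : K) - Ky ∈ F' := IntermediateField.subset_adjoin _ _ ⟨0, rfl⟩
      have hw : (Kx - Ky) / Kx ∈ F' := IntermediateField.subset_adjoin _ _ ⟨1, rfl⟩
      have hy : Ky ∈ F' := by
        have h := F'.sub_mem F'.one_mem hu
        simpa [sub_sub_cancel] using h
      have hx : Kx ∈ F' := by
        have hid : Ky / ((1 : K) - (Kx - Ky) / Kx) = Kx := by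
          rw [show (1 : K) - (Kx - Ky) / Kx = Ky / Kx by field_simp [hKx0]; try ring]
          rw [div_div_eq_mul_div, mul_comm, mul_div_assoc, div_self hKy0, mul_one]
        rw [← hid]
        exact F'.div_mem hy (F'.sub_mem F'.one_mem hw)
      have hpoly : ∀ p : R2, algebraMap R2 K p ∈ F' := by
        intro p
        induction p using MvPolynomial.induction_on with
        | C a =>
          have : algebraMap R2 K (C a) = algebraMap ℂ K a := by
            rw [← MvPolynomial.algebraMap_eq, ← IsScalarTower.algebraMap_apply]
          rw [this]
          exact F'.algebraMap_mem a
        | add p q hp hq =>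
          rw [RingHom.map_add]; exact F'.add_mem hp hq
        | mul_X p i hp =>
          rw [map_mul]
          refine F'.mul_mem hp ?_
          fin_cases i
          · exact hx
          · exact hy
      obtain ⟨a, b, -, rfl⟩ := IsFractionRing.div_surjective (A := R2) z
      exact F'.div_mem (hpoly a) (hpoly b)
    refine ⟨(hvi.aevalEquivField.trans (IntermediateField.equivOfEq htop)).trans
      IntermediateField.topEquiv, ?_, ?_⟩
    · have h := hvi.aevalEquivField_algebraMap_apply_coe (X 0)
      simp only [AlgEquiv.trans_apply, IntermediateField.topEquiv_apply,
        IntermediateField.equivOfEq_apply]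
      rw [show Kx = algebraMap R2 K (X 0) from rfl, h]
      simp [hv]
    · have h := hvi.aevalEquivField_algebraMap_apply_coe (X 1)
      simp only [AlgEquiv.trans_apply, IntermediateField.topEquiv_apply,
        IntermediateField.equivOfEq_apply]
      rw [show Ky = algebraMap R2 K (X 1) from rfl, h]
      simp [hv, Kx, Ky]
  · -- order five
    intro φ ha hb
    have hx1 : φ ((1 : K) - Ky) = Ky / Kx := by
      simp only [map_sub, map_one, hb]
      field_simp [hKx0, hKy0, h1y, h1x, hxmy]
      ring
    have hy1 : φ ((Kx - Ky) / Kx) = Ky * (1 - Kx) / (Kx * (1 - Ky)) := by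
      simp only [map_div₀, map_mul, map_sub, map_one, ha, hb]
      field_simp [hKx0, hKy0, h1y, h1x, hxmy]
      try ring
    have hx2 : φ (Ky / Kx) = (Kx - Ky) / (Kx * (1 - Ky)) := by
      simp only [map_div₀, map_mul, map_sub, map_one, ha, hb]
      field_simp [hKx0, hKy0, h1y, h1x, hxmy]
      try ring
    have hy2 : φ (Ky * (1 - Kx) / (Kx * (1 - Ky))) = (Kx - Ky) / (1 - Ky) := by
      simp only [map_div₀, map_mul, map_sub, map_one, ha, hb]
      field_simp [hKx0, hKy0, h1y, h1x, hxmy]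
      try ring
    have hx3 : φ ((Kx - Ky) / (Kx * (1 - Ky))) = (1 - Kx) / (1 - Ky) := by
      simp only [map_div₀, map_mul, map_sub, map_one, ha, hb]
      field_simp [hKx0, hKy0, h1y, h1x, hxmy]
      try ring
    have hy3 : φ ((Kx - Ky) / (1 - Ky)) = 1 - Kx := by
      simp only [map_div₀, map_mul, map_sub, map_one, ha, hb]
      field_simp [hKx0, hKy0, h1y, h1x, hxmy]
      try ring
    have hx4 : φ ((1 - Kx) / (1 - Ky)) = Kx := by
      simp only [map_div₀, map_mul, map_sub, map_one, ha, hb]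
      field_simp [hKx0, hKy0, h1y, h1x, hxmy]
      try ring
    have hy4 : φ ((1 : K) - Kx) = Ky := by
      simp only [map_sub, map_one, ha]
      ring
    have hpow : ∀ z : K, (φ ^ 5) z = φ (φ (φ (φ (φ z)))) := by
      intro z
      simp only [pow_succ, pow_zero, one_mul, AlgEquiv.mul_apply]
    constructor
    · apply algEquiv_ext
      · rw [hpow, ha, hx1, hx2, hx3, hx4, AlgEquiv.one_apply]
      · rw [hpow, hb, hy1, hy2, hy3, hy4, AlgEquiv.one_apply]
    · intro h
      apply hone_sub_ne
      rw [← ha, h, AlgEquiv.one_apply]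
end
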